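/- Let μ > 0, λ ∈ (0,1), and a ∈ [−1,1]. There exist ρ > 0, ρ1 > 0, ρ2 > 0, real numbers r̂1, r̂2, and x̃ ∈ {−1, 1} satisfying the system (1−λ)μa + (1−x̃)/ρ = 0, (1−λ)μa·(ρ1² + ρ² − ρ2² − 2r̂2)/(2ρρ1) + 1/ρ1 = 0, (1−λ)μa·(ρ2² + ρ² − ρ1² + 2r̂1)/(2ρρ2) + 1/ρ2 = 0, and ((1−λ)μa/ρ)·(r̂1 − r̂2) = 0, if and only if a < 0. Moreover, every such solution satisfies x̃ = −1, r̂1 = r̂2, ρ = 2/((1−λ)μ(−a)), and ρ1² − ρ2² − 2r̂1 = 0. -/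
import Mathlib

lemma stmt13_aux (μ lam a ρ ρ1 ρ2 rh1 rh2 xt : ℝ) (hμ : μ > 0) (hlam2 : lam < 1)
    (hρ : ρ > 0) (hρ1 : ρ1 > 0) (hρ2 : ρ2 > 0)
    (hxt : xt = -1 ∨ xt = 1)
    (e1 : (1 - lam) * μ * a + (1 - xt) / ρ = 0)
    (e2 : (1 - lam) * μ * a * ((ρ1 ^ 2 + ρ ^ 2 - ρ2 ^ 2 - 2 * rh2) / (2 * ρ * ρ1))
        + 1 / ρ1 = 0)
    (e4 : ((1 - lam) * μ * a / ρ) * (rh1 - rh2) = 0) :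
    a < 0 ∧ xt = -1 ∧ rh1 = rh2 ∧ ρ = 2 / ((1 - lam) * μ * (-a)) ∧
      ρ1 ^ 2 - ρ2 ^ 2 - 2 * rh1 = 0 := by
  have hc : (0:ℝ) < (1 - lam) * μ := mul_pos (by linarith) hμ
  have hxtm : xt = -1 := by
    rcases hxt with h | h
    · exact h
    · exfalso
      subst h
      have hz : a = 0 := by
        have h1 := e1
        simp at h1
        rcases h1 with (h | h) | h
        · linarith
        · linarith
        · exact h
      rw [hz, mul_zero, zero_mul, zero_add] at e2
      simp at e2
      have : (1:ℝ) / ρ1 > 0 := by positivity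
      linarith
  subst hxtm
  have key : (1 - lam) * μ * a * ρ = -2 := by
    have h1 := e1
    field_simp at h1
    linarith
  have haneg : a < 0 := by
    by_contra h
    push_neg at h
    nlinarith [mul_nonneg (mul_nonneg hc.le h) hρ.le]
  have hca : (1 - lam) * μ * a ≠ 0 := ne_of_lt (mul_neg_of_pos_of_neg hc haneg)
  have hr : rh1 = rh2 := by
    have hne : (1 - lam) * μ * a / ρ ≠ 0 := div_ne_zero hca (ne_of_gt hρ)
    rcases mul_eq_zero.mp e4 with h | h
    · exact absurd h hne
    · linarith
  refine ⟨haneg, rfl, hr, ?_, ?_⟩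
  · rw [eq_div_iff (by nlinarith : (1 - lam) * μ * (-a) ≠ 0)]
    nlinarith
  · have h2 : (1 - lam) * μ * a * (ρ1 ^ 2 + ρ ^ 2 - ρ2 ^ 2 - 2 * rh2) + 2 * ρ = 0 := by
      field_simp at e2
      nlinarith [e2]
    have heq : (1 - lam) * μ * a * (ρ1 ^ 2 + ρ ^ 2 - ρ2 ^ 2 - 2 * rh2)
        = (1 - lam) * μ * a * (ρ ^ 2) := by nlinarith
    have hX : ρ1 ^ 2 + ρ ^ 2 - ρ2 ^ 2 - 2 * rh2 = ρ ^ 2 :=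
      mul_left_cancel₀ hca heq
    rw [hr]; linarith



/-- Configuration III with a0 = 0: the reduced equilibrium system
has a solution (ρ, ρ1, ρ2, r̂1, r̂2, x̃) with ρ, ρ1, ρ2 > 0 and x̃ ∈ {−1,1} iff
a < 0; moreover every solution has x̃ = −1, r̂1 = r̂2, ρ = 2/((1−λ)μ(−a)), and
ρ1² − ρ2² − 2r̂1 = 0. -/
theorem stmt13 (μ lam a : ℝ) (hμ : μ > 0) (hlam1 : 0 < lam) (hlam2 : lam < 1)
    (ha : a ∈ Set.Icc (-1 : ℝ) 1) :
    ((∃ ρ ρ1 ρ2 rh1 rh2 xt : ℝ, ρ > 0 ∧ ρ1 > 0 ∧ ρ2 > 0 ∧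
        (xt = -1 ∨ xt = 1) ∧
        (1 - lam) * μ * a + (1 - xt) / ρ = 0 ∧
        (1 - lam) * μ * a * ((ρ1 ^ 2 + ρ ^ 2 - ρ2 ^ 2 - 2 * rh2) / (2 * ρ * ρ1))
          + 1 / ρ1 = 0 ∧
        (1 - lam) * μ * a * ((ρ2 ^ 2 + ρ ^ 2 - ρ1 ^ 2 + 2 * rh1) / (2 * ρ * ρ2))
          + 1 / ρ2 = 0 ∧
        ((1 - lam) * μ * a / ρ) * (rh1 - rh2) = 0) ↔
      a < 0) ∧
    (∀ ρ ρ1 ρ2 rh1 rh2 xt : ℝ, ρ > 0 → ρ1 > 0 → ρ2 > 0 →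
      (xt = -1 ∨ xt = 1) →
      (1 - lam) * μ * a + (1 - xt) / ρ = 0 →
      (1 - lam) * μ * a * ((ρ1 ^ 2 + ρ ^ 2 - ρ2 ^ 2 - 2 * rh2) / (2 * ρ * ρ1))
        + 1 / ρ1 = 0 →
      (1 - lam) * μ * a * ((ρ2 ^ 2 + ρ ^ 2 - ρ1 ^ 2 + 2 * rh1) / (2 * ρ * ρ2))
        + 1 / ρ2 = 0 →
      ((1 - lam) * μ * a / ρ) * (rh1 - rh2) = 0 →
      xt = -1 ∧ rh1 = rh2 ∧ ρ = 2 / ((1 - lam) * μ * (-a)) ∧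
        ρ1 ^ 2 - ρ2 ^ 2 - 2 * rh1 = 0) := by
  have hc : (0:ℝ) < (1 - lam) * μ := mul_pos (by linarith) hμ
  constructor
  · constructor
    · rintro ⟨ρ, ρ1, ρ2, rh1, rh2, xt, hρ, hρ1, hρ2, hxt, e1, e2, e3, e4⟩
      exact (stmt13_aux μ lam a ρ ρ1 ρ2 rh1 rh2 xt hμ hlam2 hρ hρ1 hρ2 hxt e1 e2 e4).1
    · intro haneg
      have hca : (1 - lam) * μ * a < 0 := mul_neg_of_pos_of_neg hc haneg
      set cma := (1 - lam) * μ * (-a) with hcma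
      have hcma0 : 0 < cma := mul_pos hc (neg_pos.mpr haneg)
      have hcaeq : (1 - lam) * μ * a = -cma := by rw [hcma]; ring
      refine ⟨2 / cma, 1, 1, 0, 0, -1, div_pos two_pos hcma0, one_pos, one_pos,
        Or.inl rfl, ?_, ?_, ?_, ?_⟩
      · rw [hcaeq]
        field_simp
        ring
      · rw [hcaeq]
        field_simp
        ring
      · rw [hcaeq]
        field_simp
        ring
      · ring
  · intro ρ ρ1 ρ2 rh1 rh2 xt hρ hρ1 hρ2 hxt e1 e2 e3 e4
    exact (stmt13_aux μ lam a ρ ρ1 ρ2 rh1 rh2 xt hμ hlam2 hρ hρ1 hρ2 hxt e1 e2 e4).2
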